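/- Let r be a positive integer, d a natural number, and let g_1, …, g_k be linearly independent homogeneous polynomials of degree d in the variables x_0, …, x_n over ℂ. Let f_1, …, f_M be polynomials lying in the ℂ-linear span of g_1, …, g_k, with M ≥ (k−1)·r^n + 1, such that every k-element subset of {f_1, …, f_M} is linearly independent. Then ⋂_{i=1}^M ψ_r '' {x : Fin (n+1) → ℂ | f_i(x) = 0} = ψ_r '' {x : Fin (n+1) → ℂ | g_1(x) = ⋯ = g_k(x) = 0}. (Taking (k−1)r^n + 1 sufficiently general linear combinations of k degree-d forms produces an r-th power basis of the ideal they generate.) -/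

import Mathlib

open MvPolynomial

private lemma eval_mul_smul_isHomogeneous {m d : ℕ} {p : MvPolynomial (Fin m) ℂ}
    (hp : p.IsHomogeneous d) (c : ℂ) (x : Fin m → ℂ) :
    eval (fun j => c * x j) p = c ^ d * eval x p := by
  rw [eval_eq', eval_eq', Finset.mul_sum]
  apply Finset.sum_congr rfl
  intro md hmd
  have hdeg : ∑ i, md i = d := by
    have h2 := hp (mem_support_iff.mp hmd)
    rw [Finsupp.weight_apply, Finsupp.sum] at h2
    simp only [Pi.one_apply, smul_eq_mul, mul_one] at h2
    rw [← h2]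
    exact (Finset.sum_subset (Finset.subset_univ _)
      (fun i _ hi => Finsupp.notMem_support_iff.mp hi)).symm
  calc coeff md p * ∏ i, (c * x i) ^ md i
      = coeff md p * ((∏ i, c ^ md i) * ∏ i, x i ^ md i) := by
        rw [← Finset.prod_mul_distrib]; simp_rw [mul_pow]
    _ = c ^ d * (coeff md p * ∏ i, x i ^ md i) := by
        rw [Finset.prod_pow_eq_pow_sum, hdeg]; ring

/-- Taking `(k−1)·rⁿ + 1` linear combinations of `k` linearly independent degree-`d`
forms `g₁, …, g_k`, any `k` of which are linearly independent, produces an `r`-th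
power basis: the intersection of the coordinate-wise `r`-th powers of the
hypersurfaces `Z(f_i)` equals the coordinate-wise `r`-th power of `Z(g₁, …, g_k)`. -/
theorem general_combinations_power_basis (r : ℕ) (hr : 0 < r) (n d k M : ℕ)
    (g : Fin k → MvPolynomial (Fin (n + 1)) ℂ)
    (hg_hom : ∀ j, (g j).IsHomogeneous d)
    (hg_li : LinearIndependent ℂ g)
    (f : Fin M → MvPolynomial (Fin (n + 1)) ℂ)
    (hf_span : ∀ i, f i ∈ Submodule.span ℂ (Set.range g))
    (hM : (k - 1) * r ^ n + 1 ≤ M)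
    (hf_li : ∀ s : Finset (Fin M), s.card = k →
      LinearIndependent ℂ (fun i : s => f i)) :
    (⋂ i, (fun x : Fin (n + 1) → ℂ => fun j => (x j) ^ r) '' {x | eval x (f i) = 0})
      = (fun x : Fin (n + 1) → ℂ => fun j => (x j) ^ r) ''
          {x | ∀ j, eval x (g j) = 0} := by
  -- each `f i` is homogeneous of degree `d`
  have hfhom : ∀ i, (f i).IsHomogeneous d := by
    intro i
    have hle : Submodule.span ℂ (Set.range g) ≤ homogeneousSubmodule (Fin (n + 1)) ℂ d := by
      rw [Submodule.span_le]
      rintro _ ⟨j, rfl⟩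
      exact hg_hom j
    exact hle (hf_span i)
  -- evaluation as a linear map
  have haev : ∀ (x : Fin (n + 1) → ℂ) (p : MvPolynomial (Fin (n + 1)) ℂ),
      (aeval x : MvPolynomial (Fin (n + 1)) ℂ →ₐ[ℂ] ℂ) p = eval x p := by
    intro x p
    exact RingHom.congr_fun (coe_aeval_eq_eval x) p
  -- the key span argument: if `k` of the `f i` vanish at `x`, then all `g j` vanish at `x`.
  have key : ∀ (s : Finset (Fin M)) (x : Fin (n + 1) → ℂ), s.card = k →
      (∀ i ∈ s, eval x (f i) = 0) → ∀ j, eval x (g j) = 0 := by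
    intro s x hcard hvan j
    set W := Submodule.span ℂ (Set.range g) with hW
    set U := Submodule.span ℂ (f '' ↑s) with hU
    have hUW : U ≤ W := by
      rw [hU, Submodule.span_le]
      rintro _ ⟨i, _, rfl⟩
      exact hf_span i
    have hWfd : FiniteDimensional ℂ W := FiniteDimensional.span_of_finite ℂ (Set.finite_range g)
    have hUk : Module.finrank ℂ U = k := by
      have hli := hf_li s hcard
      have h2 := finrank_span_eq_card hli
      have him : f '' ↑s = Set.range fun i : s => f ↑i := Set.image_eq_range f ↑s
      rw [hU, him, h2, Fintype.card_coe, hcard]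
    have hWk : Module.finrank ℂ W ≤ k := by
      have := finrank_range_le_card (R := ℂ) g
      simpa [Fintype.card_fin, Set.finrank] using this
    have hUWeq : U = W := Submodule.eq_of_le_of_finrank_le hUW (hWk.trans hUk.ge)
    have hgU : g j ∈ U := hUWeq ▸ Submodule.subset_span ⟨j, rfl⟩
    have hker : U ≤ LinearMap.ker
        ((aeval x : MvPolynomial (Fin (n + 1)) ℂ →ₐ[ℂ] ℂ).toLinearMap) := by
      rw [hU, Submodule.span_le]
      rintro _ ⟨i, hi, rfl⟩
      simp only [SetLike.mem_coe, LinearMap.mem_ker, AlgHom.toLinearMap_apply]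
      rw [haev]
      exact hvan i hi
    have := hker hgU
    simp only [LinearMap.mem_ker, AlgHom.toLinearMap_apply] at this
    rwa [haev] at this
  have hrn1 : 1 ≤ r ^ n := Nat.one_le_pow _ _ hr
  have hkM : k ≤ M := by
    have h1 : k - 1 ≤ (k - 1) * r ^ n := Nat.le_mul_of_pos_right _ hrn1
    omega
  apply Set.Subset.antisymm
  · -- hard direction
    intro y hy
    simp only [Set.mem_iInter, Set.mem_image, Set.mem_setOf_eq] at hy
    choose xw hxw1 hxw2 using hy
    have hxwr : ∀ i j, (xw i j) ^ r = y j := by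
      intro i j
      exact congrFun (hxw2 i) j
    by_cases hy0 : ∀ j, y j = 0
    · -- y = 0 : all witnesses are 0
      have hM1 : 0 < M := by omega
      have hx0 : xw ⟨0, hM1⟩ = 0 := by
        funext j
        have := hxwr ⟨0, hM1⟩ j
        rw [hy0 j] at this
        exact pow_eq_zero_iff hr.ne' |>.mp this
      obtain ⟨s, _, hscard⟩ := Finset.exists_subset_card_eq (s := (Finset.univ : Finset (Fin M))) (n := k)
        (by simpa using hkM)
      have hvan : ∀ i ∈ s, eval (0 : Fin (n + 1) → ℂ) (f i) = 0 := by
        intro i _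
        have h1 := hxw1 i
        have hxi0 : xw i = 0 := by
          funext j
          have := hxwr i j
          rw [hy0 j] at this
          exact pow_eq_zero_iff hr.ne' |>.mp this
        rwa [hxi0] at h1
      refine ⟨0, key s 0 hscard hvan, ?_⟩
      funext j
      simp only [Pi.zero_apply, zero_pow hr.ne', hy0 j]
    · push_neg at hy0
      obtain ⟨j₀, hj₀⟩ := hy0
      have hxj₀ : ∀ i, xw i j₀ ≠ 0 := by
        intro i hzero
        apply hj₀
        rw [← hxwr i j₀, hzero, zero_pow hr.ne']
      -- the finite set of possible normalized witnesses
      set rootsF : Fin (n + 1) → Finset ℂ := fun j =>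
        if j = j₀ then {1}
        else ((Polynomial.X ^ r - Polynomial.C (y j / y j₀)).roots.toFinset) with hrootsF
      set t : Finset (Fin (n + 1) → ℂ) := Fintype.piFinset rootsF with ht
      have htcard : t.card ≤ r ^ n := by
        rw [ht, Fintype.card_piFinset]
        calc ∏ j, (rootsF j).card ≤ ∏ j : Fin (n + 1), (if j = j₀ then 1 else r) := by
              apply Finset.prod_le_prod'
              intro j _
              rw [hrootsF]
              by_cases hj : j = j₀
              · simp [hj]
              · simp only [hj, if_false]
                calc ((Polynomial.X ^ r - Polynomial.C (y j / y j₀)).roots.toFinset).card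
                    ≤ Multiset.card (Polynomial.X ^ r - Polynomial.C (y j / y j₀)).roots :=
                      Multiset.toFinset_card_le _
                  _ ≤ (Polynomial.X ^ r - Polynomial.C (y j / y j₀)).natDegree :=
                      Polynomial.card_roots' _
                  _ = r := Polynomial.natDegree_X_pow_sub_C
          _ = r ^ n := by
              rw [Finset.prod_ite]
              simp only [Finset.prod_const_one, Finset.prod_const, one_mul]
              congr 1
              rw [Finset.filter_ne']
              rw [Finset.card_erase_of_mem (Finset.mem_univ _)]
              simp
      -- normalized witnesses
      set c : Fin M → (Fin (n + 1) → ℂ) := fun i j => xw i j / xw i j₀ with hc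
      have hmaps : ∀ i ∈ (Finset.univ : Finset (Fin M)), c i ∈ t := by
        intro i _
        rw [ht, Fintype.mem_piFinset]
        intro j
        rw [hrootsF]
        by_cases hj : j = j₀
        · subst hj
          simp [hc, div_self (hxj₀ i)]
        · simp only [hj, if_false, Multiset.mem_toFinset]
          rw [Polynomial.mem_roots (Polynomial.X_pow_sub_C_ne_zero hr _)]
          simp only [Polynomial.IsRoot, Polynomial.eval_sub, Polynomial.eval_pow,
            Polynomial.eval_X, Polynomial.eval_C, sub_eq_zero]
          rw [hc]
          rw [div_pow, hxwr i j, hxwr i j₀]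
      -- pigeonhole
      have hpig : t.card * (k - 1) < (Finset.univ : Finset (Fin M)).card := by
        rw [Finset.card_univ, Fintype.card_fin]
        calc t.card * (k - 1) ≤ r ^ n * (k - 1) := Nat.mul_le_mul_right _ htcard
          _ = (k - 1) * r ^ n := Nat.mul_comm _ _
          _ < M := by omega
      obtain ⟨z, hzt, hzcard⟩ :=
        Finset.exists_lt_card_fiber_of_mul_lt_card_of_maps_to hmaps hpig
      obtain ⟨s, hs_sub, hscard⟩ := Finset.exists_subset_card_eq
        (s := Finset.filter (fun i => c i = z) Finset.univ) (n := k) (by omega)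
      -- the `f i` for `i ∈ s` vanish at `z`
      have hvan : ∀ i ∈ s, eval z (f i) = 0 := by
        intro i hi
        have hiz : c i = z := by
          have := hs_sub hi
          simp only [Finset.mem_filter] at this
          exact this.2
        have hxi : ∀ j, xw i j = xw i j₀ * z j := by
          intro j
          rw [← hiz, hc]
          simp only
          rw [mul_comm]
          exact (div_mul_cancel₀ _ (hxj₀ i)).symm
        have h1 := hxw1 i
        have h2 : eval (fun j => xw i j₀ * z j) (f i) = (xw i j₀) ^ d * eval z (f i) :=
          eval_mul_smul_isHomogeneous (hfhom i) _ _
        have h3 : xw i = fun j => xw i j₀ * z j := funext hxi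
        rw [h3, h2] at h1
        exact (mul_eq_zero.mp h1).resolve_left (pow_ne_zero _ (hxj₀ i))
      have hgz : ∀ j, eval z (g j) = 0 := key s z hscard hvan
      -- the coordinates of z are r-th roots of y j / y j₀
      have hzr : ∀ j, (z j) ^ r = y j / y j₀ := by
        intro j
        rw [ht, Fintype.mem_piFinset] at hzt
        have := hzt j
        rw [hrootsF] at this
        by_cases hj : j = j₀
        · subst hj
          simp only [eq_self_iff_true, if_true, Finset.mem_singleton] at this
          rw [this, one_pow, div_self hj₀]
        · simp only [hj, if_false, Multiset.mem_toFinset] at this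
          rw [Polynomial.mem_roots (Polynomial.X_pow_sub_C_ne_zero hr _)] at this
          simpa [Polynomial.IsRoot, sub_eq_zero] using this
      -- pick an r-th root of y j₀
      obtain ⟨w, hw⟩ := IsAlgClosed.exists_pow_nat_eq (y j₀) hr
      refine ⟨fun j => w * z j, ?_, ?_⟩
      · intro j
        rw [eval_mul_smul_isHomogeneous (hg_hom j) w z, hgz j, mul_zero]
      · funext j
        simp only
        rw [mul_pow, hw, hzr j, mul_div_cancel₀ _ hj₀]
  · -- easy direction
    apply Set.subset_iInter
    intro i
    apply Set.image_mono
    intro x hx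
    have hker : Submodule.span ℂ (Set.range g) ≤ LinearMap.ker
        ((aeval x : MvPolynomial (Fin (n + 1)) ℂ →ₐ[ℂ] ℂ).toLinearMap) := by
      rw [Submodule.span_le]
      rintro _ ⟨j, rfl⟩
      simp only [SetLike.mem_coe, LinearMap.mem_ker, AlgHom.toLinearMap_apply]
      rw [haev]
      exact hx j
    have := hker (hf_span i)
    simp only [LinearMap.mem_ker, AlgHom.toLinearMap_apply] at this
    rw [haev] at this
    exact this
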